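/- Let λ2* < μ2*, η1 > 0, ω1², ω2² > 0, p ∈ [0,1], y > 0, and let ζ1(0) = [(λ1*−μ1*) + √((λ1*−μ1*)² + 2ω1²η1)]/ω1². Then the function E(y) = y/(μ2*−λ2*) + (p/η1)(1 − (μ1*−λ1*)/(μ2*−λ2*))(1 − e^{−y ζ1(0)}) equals −K'(0|y), the negative derivative at s = 0 of K(s|y) = p e^{−yζ1(s)} + (1−p) e^{−yθ1(s)} + 2η1 p [e^{−yζ1(s)} − e^{−yθ1(s)}]/(ω1²[ζ1(s)−θ1(s)][ζ2(s)−θ1(s)]), where ζ1(s), ζ2(s) = [(λ1*−μ1*) ± √((λ1*−μ1*)² + 2ω1²(s+η1))]/ω1² and θ1(s) = [(λ2*−μ2*) + √((λ2*−μ2*)² + 2ω2²s)]/ω2². -/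

import Mathlib

set_option maxHeartbeats 1600000 in
theorem stmt_17 (l1 m1 l2 m2 e1 w1 w2 p y : ℝ)
    (hstab : l2 < m2) (he1 : 0 < e1) (hw1 : 0 < w1) (hw2 : 0 < w2)
    (hp0 : 0 ≤ p) (hp1 : p ≤ 1) (hy : 0 < y)
    (zeta1 zeta2 theta1 : ℝ → ℝ) (K : ℝ → ℝ)
    (hz1 : ∀ s, zeta1 s = ((l1 - m1) + Real.sqrt ((l1 - m1)^2 + 2*w1*(s + e1))) / w1)
    (hz2 : ∀ s, zeta2 s = ((l1 - m1) - Real.sqrt ((l1 - m1)^2 + 2*w1*(s + e1))) / w1)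
    (ht1 : ∀ s, theta1 s = ((l2 - m2) + Real.sqrt ((l2 - m2)^2 + 2*w2*s)) / w2)
    (hK : ∀ s, K s = p * Real.exp (-y * zeta1 s) + (1 - p) * Real.exp (-y * theta1 s)
        + 2*e1*p * (Real.exp (-y * zeta1 s) - Real.exp (-y * theta1 s))
          / (w1 * (zeta1 s - theta1 s) * (zeta2 s - theta1 s))) :
    y/(m2 - l2) + (p/e1) * (1 - (m1 - l1)/(m2 - l2)) * (1 - Real.exp (-y * zeta1 0))
      = -(deriv K 0) := by
  have hw1' : w1 ≠ 0 := ne_of_gt hw1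
  have hw2' : w2 ≠ 0 := ne_of_gt hw2
  have he1' : e1 ≠ 0 := ne_of_gt he1
  set a := l1 - m1 with ha
  set b := l2 - m2 with hb
  have hbneg : b < 0 := by rw [hb]; linarith
  have hQ : 0 < a^2 + 2*w1*e1 := by positivity
  have hR2 : Real.sqrt (a^2 + 2*w1*e1) ^ 2 = a^2 + 2*w1*e1 := Real.sq_sqrt hQ.le
  set R := Real.sqrt (a^2 + 2*w1*e1) with hRdef
  have hRpos : 0 < R := Real.sqrt_pos.mpr hQ
  have hSb : Real.sqrt (b^2) = -b := by
    rw [Real.sqrt_sq_eq_abs, abs_of_neg hbneg]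
  -- rewrite K as explicit function
  have hKF : K = (fun s : ℝ =>
      p * Real.exp (-y * ((a + Real.sqrt (a^2 + 2*w1*(s + e1))) / w1))
      + (1 - p) * Real.exp (-y * ((b + Real.sqrt (b^2 + 2*w2*s)) / w2))
      + 2*e1*p * (Real.exp (-y * ((a + Real.sqrt (a^2 + 2*w1*(s + e1))) / w1))
          - Real.exp (-y * ((b + Real.sqrt (b^2 + 2*w2*s)) / w2)))
        / (w1 * ((a + Real.sqrt (a^2 + 2*w1*(s + e1))) / w1
              - (b + Real.sqrt (b^2 + 2*w2*s)) / w2)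
            * ((a - Real.sqrt (a^2 + 2*w1*(s + e1))) / w1
              - (b + Real.sqrt (b^2 + 2*w2*s)) / w2))) :=
    funext fun s => by rw [hK s, hz1 s, hz2 s, ht1 s]
  -- derivatives of the inner functions at 0
  have hg1 : HasDerivAt (fun s : ℝ => a^2 + 2*w1*(s + e1)) (2*w1) 0 := by
    simpa using (((hasDerivAt_id (0:ℝ)).add_const e1).const_mul (2*w1)).const_add (a^2)
  have hg1ne : a^2 + 2*w1*(0 + e1) ≠ 0 := by
    simpa using hQ.ne'
  have hsq1 : HasDerivAt (fun s : ℝ => Real.sqrt (a^2 + 2*w1*(s + e1)))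
      (1 / (2 * R) * (2*w1)) 0 := by
    have := (Real.hasDerivAt_sqrt hg1ne).comp 0 hg1
    simpa [hRdef, Function.comp_def] using this
  have hz1d : HasDerivAt (fun s : ℝ => (a + Real.sqrt (a^2 + 2*w1*(s + e1))) / w1)
      ((1 / (2 * R) * (2*w1)) / w1) 0 := (hsq1.const_add a).div_const w1
  have hz2d : HasDerivAt (fun s : ℝ => (a - Real.sqrt (a^2 + 2*w1*(s + e1))) / w1)
      ((-(1 / (2 * R) * (2*w1))) / w1) 0 := by
    simpa [sub_eq_add_neg] using ((hsq1.const_mul (-1)).const_add a).div_const w1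
  have hg2 : HasDerivAt (fun s : ℝ => b^2 + 2*w2*s) (2*w2) 0 := by
    simpa using ((hasDerivAt_id (0:ℝ)).const_mul (2*w2)).const_add (b^2)
  have hg2ne : b^2 + 2*w2*0 ≠ 0 := by
    simp; nlinarith
  have hsq2 : HasDerivAt (fun s : ℝ => Real.sqrt (b^2 + 2*w2*s))
      (1 / (2 * (-b)) * (2*w2)) 0 := by
    have := (Real.hasDerivAt_sqrt hg2ne).comp 0 hg2
    simpa [hSb, Function.comp_def] using this
  have ht1d : HasDerivAt (fun s : ℝ => (b + Real.sqrt (b^2 + 2*w2*s)) / w2)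
      ((1 / (2 * (-b)) * (2*w2)) / w2) 0 := (hsq2.const_add b).div_const w2
  -- values at 0
  have hz10 : (a + Real.sqrt (a^2 + 2*w1*(0 + e1))) / w1 = (a + R) / w1 := by
    norm_num [hRdef]
  have hz20 : (a - Real.sqrt (a^2 + 2*w1*(0 + e1))) / w1 = (a - R) / w1 := by
    norm_num [hRdef]
  have ht10 : (b + Real.sqrt (b^2 + 2*w2*0)) / w2 = 0 := by
    simp [hSb]
  -- exponentials
  have hA : HasDerivAt (fun s : ℝ => Real.exp (-y * ((a + Real.sqrt (a^2 + 2*w1*(s + e1))) / w1)))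
      (Real.exp (-y * ((a + R) / w1)) * (-y * ((1 / (2 * R) * (2*w1)) / w1))) 0 := by
    have := (hz1d.const_mul (-y)).exp
    simpa [hz10] using this
  have hB : HasDerivAt (fun s : ℝ => Real.exp (-y * ((b + Real.sqrt (b^2 + 2*w2*s)) / w2)))
      (1 * (-y * ((1 / (2 * (-b)) * (2*w2)) / w2))) 0 := by
    have := (ht1d.const_mul (-y)).exp
    simpa [hSb] using this
  -- denominator
  have hDen : HasDerivAt (fun s : ℝ => w1 * ((a + Real.sqrt (a^2 + 2*w1*(s + e1))) / w1
        - (b + Real.sqrt (b^2 + 2*w2*s)) / w2)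
      * ((a - Real.sqrt (a^2 + 2*w1*(s + e1))) / w1
        - (b + Real.sqrt (b^2 + 2*w2*s)) / w2))
      ((w1 * ((1 / (2 * R) * (2*w1)) / w1 - (1 / (2 * (-b)) * (2*w2)) / w2)) * ((a - R) / w1)
        + (w1 * ((a + R) / w1)) * ((-(1 / (2 * R) * (2*w1))) / w1 - (1 / (2 * (-b)) * (2*w2)) / w2)) 0 := by
    have := ((hz1d.sub ht1d).const_mul w1).mul (hz2d.sub ht1d)
    simpa [← hRdef, hSb, Pi.mul_def, Pi.sub_def] using this
  have hDen0 : w1 * ((a + Real.sqrt (a^2 + 2*w1*(0 + e1))) / w1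
        - (b + Real.sqrt (b^2 + 2*w2*0)) / w2)
      * ((a - Real.sqrt (a^2 + 2*w1*(0 + e1))) / w1
        - (b + Real.sqrt (b^2 + 2*w2*0)) / w2) ≠ 0 := by
    rw [hz10, hz20, ht10]
    have : w1 * ((a + R) / w1 - 0) * ((a - R) / w1 - 0) = -(2*e1) := by
      field_simp
      nlinarith [hR2]
    rw [this]
    simp [he1']
  have hNum := (hA.sub hB).const_mul (2*e1*p)
  have hFrac := hNum.div hDen hDen0
  have hF := ((hA.const_mul p).add (hB.const_mul (1-p))).add hFrac
  rw [hKF]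
  erw [hF.deriv]
  rw [hz1 0, hz10]
  norm_num [← hRdef, hSb]
  rw [show w1 * ((a + R) / w1) * ((a - R) / w1) = -(2*e1) from by
    field_simp; nlinarith [hR2]]
  rw [show m2 - l2 = -b from by rw [hb]; ring, show m1 - l1 = -a from by rw [ha]; ring]
  have hbne : b ≠ 0 := hbneg.ne
  have hRne : R ≠ 0 := hRpos.ne'
  clear_value R
  clear_value a
  clear_value b
  field_simp
  linear_combination (0:ℝ) * mul_inv_cancel₀ hbne
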